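/- Let m, n ∈ ℕ and let p_{j,ℓ}, q_{j,ℓ} ∈ ℂ with Re(p_{j,ℓ}) > 0 and Re(q_{j,ℓ}) > 0 for all 1 ≤ j ≤ n, 1 ≤ ℓ ≤ m. Then the n×n complex matrix whose (j,k) entry is ∏_{ℓ=1}^{m} B(p_{j,ℓ} + conj(p_{k,ℓ}), q_{j,ℓ} + conj(q_{k,ℓ})) is positive semidefinite, where B is the Euler Beta function. -/

import Mathlib

open Complex ComplexOrder MeasureTheory

namespace BetaPSD

noncomputable def f (p q : ℂ) (x : ℝ) : ℂ :=
  (x : ℂ) ^ (p - 1/2) * ((1 : ℂ) - x) ^ (q - 1/2)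

lemma conj_half_sub (p : ℂ) : (starRingEnd ℂ) (p - 1/2) = (starRingEnd ℂ) p - 1/2 := by
  simp [map_sub, map_div₀, map_ofNat]

lemma integrand_eq (p₁ q₁ p₂ q₂ : ℂ) {x : ℝ} (hx : x ∈ Set.Ioo (0:ℝ) 1) :
    (x:ℂ) ^ (p₁ + (starRingEnd ℂ) p₂ - 1) * ((1:ℂ) - x) ^ (q₁ + (starRingEnd ℂ) q₂ - 1)
      = f p₁ q₁ x * (starRingEnd ℂ) (f p₂ q₂ x) := by
  obtain ⟨hx0, hx1⟩ := hx
  have hxne : (x:ℂ) ≠ 0 := by exact_mod_cast hx0.ne'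
  have h1x : ((1:ℂ) - x) = ((1 - x : ℝ) : ℂ) := by push_cast; ring
  have h1xne : ((1:ℂ) - x) ≠ 0 := by
    rw [h1x]; exact_mod_cast (sub_pos.mpr hx1).ne'
  have hargx : Complex.arg (x:ℂ) ≠ Real.pi := by
    rw [Complex.arg_ofReal_of_nonneg hx0.le]; exact Real.pi_ne_zero.symm
  have harg1x : Complex.arg ((1:ℂ) - x) ≠ Real.pi := by
    rw [h1x, Complex.arg_ofReal_of_nonneg (sub_pos.mpr hx1).le]; exact Real.pi_ne_zero.symm
  have e1 : p₁ + (starRingEnd ℂ) p₂ - 1 = (p₁ - 1/2) + (starRingEnd ℂ) (p₂ - 1/2) := by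
    rw [conj_half_sub]; ring
  have e2 : q₁ + (starRingEnd ℂ) q₂ - 1 = (q₁ - 1/2) + (starRingEnd ℂ) (q₂ - 1/2) := by
    rw [conj_half_sub]; ring
  have cc : ∀ (z a : ℂ), z.arg ≠ Real.pi → (starRingEnd ℂ) z = z →
      z ^ (starRingEnd ℂ) a = (starRingEnd ℂ) (z ^ a) := by
    intro z a hz hzr
    rw [Complex.cpow_conj _ _ hz, hzr]
  rw [e1, e2, Complex.cpow_add _ _ hxne, Complex.cpow_add _ _ h1xne,
    cc _ _ hargx (Complex.conj_ofReal x),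
    cc _ _ harg1x (by rw [h1x]; exact Complex.conj_ofReal _)]
  rw [f, f, map_mul]
  ring

lemma ae_mem_Ioo : ∀ᵐ x : ℝ, x ∈ Set.uIoc (0:ℝ) 1 → x ∈ Set.Ioo (0:ℝ) 1 := by
  have h : ∀ᵐ x : ℝ, x ∉ ({1} : Set ℝ) :=
    compl_mem_ae_iff.mpr Real.volume_singleton
  filter_upwards [h] with x hx hmem
  rw [Set.uIoc_of_le zero_le_one] at hmem
  exact ⟨hmem.1, lt_of_le_of_ne hmem.2 (by simpa using hx)⟩

lemma re_pos_add (p₁ p₂ : ℂ) (h1 : 0 < p₁.re) (h2 : 0 < p₂.re) :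
    0 < (p₁ + (starRingEnd ℂ) p₂).re := by
  simp only [Complex.add_re, Complex.conj_re]
  positivity

lemma rep (p₁ q₁ p₂ q₂ : ℂ) :
    Complex.betaIntegral (p₁ + (starRingEnd ℂ) p₂) (q₁ + (starRingEnd ℂ) q₂)
      = ∫ x in (0:ℝ)..1, f p₁ q₁ x * (starRingEnd ℂ) (f p₂ q₂ x) := by
  rw [Complex.betaIntegral]
  apply intervalIntegral.integral_congr_ae
  filter_upwards [ae_mem_Ioo] with x hx hmem
  exact integrand_eq _ _ _ _ (hx hmem)

lemma integrable (p₁ q₁ p₂ q₂ : ℂ) (hp1 : 0 < p₁.re) (hp2 : 0 < p₂.re)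
    (hq1 : 0 < q₁.re) (hq2 : 0 < q₂.re) :
    IntervalIntegrable (fun x => f p₁ q₁ x * (starRingEnd ℂ) (f p₂ q₂ x)) volume 0 1 := by
  apply (Complex.betaIntegral_convergent (re_pos_add _ _ hp1 hp2)
    (re_pos_add _ _ hq1 hq2)).congr_ae
  apply (ae_restrict_iff' measurableSet_uIoc).mpr
  filter_upwards [ae_mem_Ioo] with x hx hmem
  exact integrand_eq _ _ _ _ (hx hmem)

lemma nonneg_integral (F : ℝ → ℂ) (hF : ∀ x, 0 ≤ F x) :
    0 ≤ ∫ x in (0:ℝ)..1, F x := by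
  have hre : ∀ x, F x = ((F x).re : ℂ) := by
    intro x
    have h := hF x
    rw [Complex.le_def] at h
    exact Complex.ext rfl (by simpa using h.2.symm)
  calc (0:ℂ) ≤ ((∫ x in (0:ℝ)..1, (F x).re : ℝ) : ℂ) := by
        rw [Complex.zero_le_real]
        apply intervalIntegral.integral_nonneg zero_le_one
        intro x _
        exact ((Complex.le_def).mp (hF x)).1
    _ = ∫ x in (0:ℝ)..1, F x := by
        rw [← intervalIntegral.integral_ofReal]
        apply intervalIntegral.integral_congr
        intro x _
        exact (hre x).symm

set_option maxHeartbeats 1000000 in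
lemma step (n : ℕ) (A : Fin n → Fin n → ℂ)
    (hA : ∀ c : Fin n → ℂ, 0 ≤ ∑ j, ∑ k, A j k * c j * (starRingEnd ℂ) (c k))
    (p q : Fin n → ℂ) (hp : ∀ j, 0 < (p j).re) (hq : ∀ j, 0 < (q j).re)
    (c : Fin n → ℂ) :
    0 ≤ ∑ j, ∑ k,
      (Complex.betaIntegral (p j + (starRingEnd ℂ) (p k)) (q j + (starRingEnd ℂ) (q k)) * A j k)
        * c j * (starRingEnd ℂ) (c k) := by
  set g : Fin n → Fin n → ℝ → ℂ := fun j k x =>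
    A j k * (c j * f (p j) (q j) x) * (starRingEnd ℂ) (c k * f (p k) (q k) x) with hg
  have hint : ∀ j k, IntervalIntegrable (g j k) volume 0 1 := by
    intro j k
    have : g j k = fun x =>
        (A j k * c j * (starRingEnd ℂ) (c k)) * (f (p j) (q j) x * (starRingEnd ℂ) (f (p k) (q k) x)) := by
      funext x; simp only [hg, map_mul]; ring
    rw [this]
    exact (integrable _ _ _ _ (hp j) (hp k) (hq j) (hq k)).const_mul _
  have term_eq : ∀ j k : Fin n,
      Complex.betaIntegral (p j + (starRingEnd ℂ) (p k)) (q j + (starRingEnd ℂ) (q k)) * A j k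
        * c j * (starRingEnd ℂ) (c k) = ∫ x in (0:ℝ)..1, g j k x := by
    intro j k
    rw [rep, mul_assoc, mul_assoc, ← intervalIntegral.integral_mul_const]
    apply intervalIntegral.integral_congr
    intro x _
    simp only [hg, map_mul]
    ring
  have key : (∑ j, ∑ k,
      (Complex.betaIntegral (p j + (starRingEnd ℂ) (p k)) (q j + (starRingEnd ℂ) (q k)) * A j k)
        * c j * (starRingEnd ℂ) (c k))
      = ∫ x in (0:ℝ)..1, ∑ j, ∑ k, g j k x := by
    calc (∑ j, ∑ k,
        (Complex.betaIntegral (p j + (starRingEnd ℂ) (p k)) (q j + (starRingEnd ℂ) (q k)) * A j k)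
          * c j * (starRingEnd ℂ) (c k))
        = ∑ j, ∑ k, ∫ x in (0:ℝ)..1, g j k x :=
          Finset.sum_congr rfl fun j _ => Finset.sum_congr rfl fun k _ => term_eq j k
      _ = ∑ j, ∫ x in (0:ℝ)..1, ∑ k, g j k x :=
          Finset.sum_congr rfl fun j _ =>
            (intervalIntegral.integral_finset_sum (fun k _ => hint j k)).symm
      _ = ∫ x in (0:ℝ)..1, ∑ j, ∑ k, g j k x := by
          refine (intervalIntegral.integral_finset_sum fun j _ => ?_).symm
          have e : (fun x => ∑ k, g j k x) = ∑ k, g j k := by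
            funext x; simp
          rw [e]
          exact IntervalIntegrable.sum _ (fun k _ => hint j k)
  rw [key]
  apply nonneg_integral
  intro x
  exact hA (fun j => c j * f (p j) (q j) x)

end BetaPSD

open BetaPSD in
theorem beta_product_matrix_posSemidef (m n : ℕ) (p q : Fin n → Fin m → ℂ)
    (hp : ∀ j l, 0 < (p j l).re) (hq : ∀ j l, 0 < (q j l).re) :
    ∀ c : Fin n → ℂ,
      0 ≤ ∑ j : Fin n, ∑ k : Fin n,
        (∏ l : Fin m,
            Complex.betaIntegral (p j l + (starRingEnd ℂ) (p k l))
              (q j l + (starRingEnd ℂ) (q k l)))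
          * c j * (starRingEnd ℂ) (c k) := by
  suffices H : ∀ s : Finset (Fin m), ∀ c : Fin n → ℂ,
      0 ≤ ∑ j : Fin n, ∑ k : Fin n,
        (∏ l ∈ s,
            Complex.betaIntegral (p j l + (starRingEnd ℂ) (p k l))
              (q j l + (starRingEnd ℂ) (q k l)))
          * c j * (starRingEnd ℂ) (c k) by
    exact H Finset.univ
  intro s
  induction s using Finset.induction_on with
  | empty =>
    intro c
    simp only [Finset.prod_empty, one_mul]
    have : (∑ j, ∑ k, c j * (starRingEnd ℂ) (c k))
        = ((∑ j, c j) * (starRingEnd ℂ) (∑ k, c k)) := by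
      rw [map_sum, Finset.sum_mul_sum]
    rw [this, Complex.mul_conj, Complex.zero_le_real]
    exact Complex.normSq_nonneg _
  | insert a s ha ih =>
    intro c
    have := step n
      (fun j k => ∏ l ∈ s,
        Complex.betaIntegral (p j l + (starRingEnd ℂ) (p k l))
          (q j l + (starRingEnd ℂ) (q k l)))
      ih (fun j => p j a) (fun j => q j a) (fun j => hp j a) (fun j => hq j a) c
    simpa [Finset.prod_insert ha] using this
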